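/- Let λ, λ̂ ∈ ℝ with λ̂ ≠ λ, and let z, ρ, ρ̂ : ℝ² → ℝ be smooth (C^∞) functions of (x,t) with ρ̂(x,t) ≠ ρ(x,t) for all (x,t), satisfying z_t = −6 z z_x − z_xxx, the Riccati system ρ_x = −ρ² − z − λ, ρ_t = −2(2λ − z)ρ² − 2 z_x ρ + z_xx + 2z² − 2λz − 4λ², and the Riccati system ρ̂_x = −ρ̂² − z − λ̂, ρ̂_t = −2(2λ̂ − z)ρ̂² − 2 z_x ρ̂ + z_xx + 2z² − 2λ̂z − 4λ̂². Define z' := −z − 2ρ̂² − 2λ̂ and ρ' := −(λ̂ − λ)/(ρ̂ − ρ) − ρ̂. Then z'_t = −6 z' z'_x − z'_xxx, ρ'_x = −ρ'² − z' − λ, and ρ'_t = −2(2λ − z')ρ'² − 2 z'_x ρ' + z'_xx + 2z'² − 2λz' − 4λ². -/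

import Mathlib

/-- Partial derivative in the first variable `x`. -/
noncomputable def px (f : ℝ → ℝ → ℝ) : ℝ → ℝ → ℝ := fun x t => deriv (fun y => f y t) x

/-- Partial derivative in the second variable `t`. -/
noncomputable def pt (f : ℝ → ℝ → ℝ) : ℝ → ℝ → ℝ := fun x t => deriv (fun s => f x s) t

lemma hasDerivAt_px {f : ℝ → ℝ → ℝ} (hf : ContDiff ℝ (⊤ : ℕ∞) (Function.uncurry f)) (x t : ℝ) :
    HasDerivAt (fun y => f y t) (px f x t) x := by
  have h : DifferentiableAt ℝ (fun y => f y t) x :=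
    ((hf.differentiable (by simp)).comp
      (differentiable_id.prodMk (differentiable_const t))).differentiableAt
  exact h.hasDerivAt

lemma hasDerivAt_pt {f : ℝ → ℝ → ℝ} (hf : ContDiff ℝ (⊤ : ℕ∞) (Function.uncurry f)) (x t : ℝ) :
    HasDerivAt (fun s => f x s) (pt f x t) t := by
  have h : DifferentiableAt ℝ (fun s => f x s) t :=
    ((hf.differentiable (by simp)).comp
      ((differentiable_const x).prodMk differentiable_id)).differentiableAt
  exact h.hasDerivAt

lemma contDiff_px {f : ℝ → ℝ → ℝ} (hf : ContDiff ℝ (⊤ : ℕ∞) (Function.uncurry f)) :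
    ContDiff ℝ (⊤ : ℕ∞) (Function.uncurry (px f)) := by
  have key : ∀ x t : ℝ, px f x t = fderiv ℝ (Function.uncurry f) (x, t) (1, 0) := by
    intro x t
    have hd : HasFDerivAt (Function.uncurry f) (fderiv ℝ (Function.uncurry f) (x, t)) (x, t) :=
      ((hf.differentiable (by simp)) (x, t)).hasFDerivAt
    have hg : HasDerivAt (fun y : ℝ => (y, t)) ((1 : ℝ), (0 : ℝ)) x :=
      (hasDerivAt_id x).prodMk (hasDerivAt_const x t)
    exact (hd.comp_hasDerivAt x hg).deriv
  have heq : Function.uncurry (px f) = fun p : ℝ × ℝ => fderiv ℝ (Function.uncurry f) p (1, 0) := by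
    funext p; exact key p.1 p.2
  rw [heq]
  exact (hf.fderiv_right (by exact_mod_cast le_top)).clm_apply contDiff_const

set_option maxHeartbeats 2000000 in
/-- the Darboux transformation of KdV,
`z' = −z − 2ρ̂² − 2λ̂`, `ρ' = −(λ̂−λ)/(ρ̂−ρ) − ρ̂`, maps a solution of the doubled
Riccati covering of KdV to a solution of the Riccati-extended KdV system with
parameter `λ`. -/
theorem kdv_darboux (lam lamh : ℝ) (hne : lamh ≠ lam) (z ρ ρh : ℝ → ℝ → ℝ)
    (hz : ContDiff ℝ (⊤ : ℕ∞) (Function.uncurry z))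
    (hρ : ContDiff ℝ (⊤ : ℕ∞) (Function.uncurry ρ))
    (hρh : ContDiff ℝ (⊤ : ℕ∞) (Function.uncurry ρh))
    (hsep : ∀ x t, ρh x t ≠ ρ x t)
    (hkdv : ∀ x t, pt z x t = -6 * z x t * px z x t - px (px (px z)) x t)
    (hρx : ∀ x t, px ρ x t = -(ρ x t) ^ 2 - z x t - lam)
    (hρt : ∀ x t, pt ρ x t
      = -2 * (2 * lam - z x t) * (ρ x t) ^ 2 - 2 * px z x t * ρ x t
        + px (px z) x t + 2 * (z x t) ^ 2 - 2 * lam * z x t - 4 * lam ^ 2)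
    (hρhx : ∀ x t, px ρh x t = -(ρh x t) ^ 2 - z x t - lamh)
    (hρht : ∀ x t, pt ρh x t
      = -2 * (2 * lamh - z x t) * (ρh x t) ^ 2 - 2 * px z x t * ρh x t
        + px (px z) x t + 2 * (z x t) ^ 2 - 2 * lamh * z x t - 4 * lamh ^ 2) :
    ∀ x t,
      pt (fun x t => -z x t - 2 * (ρh x t) ^ 2 - 2 * lamh) x t
          = -6 * (-z x t - 2 * (ρh x t) ^ 2 - 2 * lamh)
              * px (fun x t => -z x t - 2 * (ρh x t) ^ 2 - 2 * lamh) x t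
            - px (px (px (fun x t => -z x t - 2 * (ρh x t) ^ 2 - 2 * lamh))) x t
      ∧ px (fun x t => -(lamh - lam) / (ρh x t - ρ x t) - ρh x t) x t
          = -(-(lamh - lam) / (ρh x t - ρ x t) - ρh x t) ^ 2
            - (-z x t - 2 * (ρh x t) ^ 2 - 2 * lamh) - lam
      ∧ pt (fun x t => -(lamh - lam) / (ρh x t - ρ x t) - ρh x t) x t
          = -2 * (2 * lam - (-z x t - 2 * (ρh x t) ^ 2 - 2 * lamh))
              * (-(lamh - lam) / (ρh x t - ρ x t) - ρh x t) ^ 2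
            - 2 * px (fun x t => -z x t - 2 * (ρh x t) ^ 2 - 2 * lamh) x t
              * (-(lamh - lam) / (ρh x t - ρ x t) - ρh x t)
            + px (px (fun x t => -z x t - 2 * (ρh x t) ^ 2 - 2 * lamh)) x t
            + 2 * (-z x t - 2 * (ρh x t) ^ 2 - 2 * lamh) ^ 2
            - 2 * lam * (-z x t - 2 * (ρh x t) ^ 2 - 2 * lamh) - 4 * lam ^ 2 := by
  have hz1 : ContDiff ℝ (⊤ : ℕ∞) (Function.uncurry (px z)) := contDiff_px hz
  have hz2 : ContDiff ℝ (⊤ : ℕ∞) (Function.uncurry (px (px z))) := contDiff_px hz1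
  -- first x-derivative of z'
  have E1 : px (fun x t => -z x t - 2 * (ρh x t) ^ 2 - 2 * lamh)
      = fun x t => -px z x t + 4 * (ρh x t) ^ 3 + 4 * (z x t * ρh x t) + 4 * lamh * ρh x t := by
    funext x t
    have hD := ((hasDerivAt_px hz x t).neg.sub
      (((hasDerivAt_px hρh x t).pow 2).const_mul 2)).sub_const (2 * lamh)
    have h4 : px (fun x t => -z x t - 2 * (ρh x t) ^ 2 - 2 * lamh) x t = _ := hD.deriv
    show _ = -px z x t + 4 * (ρh x t) ^ 3 + 4 * (z x t * ρh x t) + 4 * lamh * ρh x t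
    rw [h4, hρhx x t]; ring
  -- second x-derivative of z'
  have E2 : px (px (fun x t => -z x t - 2 * (ρh x t) ^ 2 - 2 * lamh))
      = fun x t => -px (px z) x t - 12 * (ρh x t) ^ 4 - 16 * (z x t * (ρh x t) ^ 2)
          - 16 * lamh * (ρh x t) ^ 2 - 4 * (z x t) ^ 2 - 8 * lamh * z x t - 4 * lamh ^ 2
          + 4 * (px z x t * ρh x t) := by
    rw [E1]
    funext x t
    have hD := (((hasDerivAt_px hz1 x t).neg.add
        (((hasDerivAt_px hρh x t).pow 3).const_mul 4)).add
        (((hasDerivAt_px hz x t).mul (hasDerivAt_px hρh x t)).const_mul 4)).add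
        ((hasDerivAt_px hρh x t).const_mul (4 * lamh))
    have h4 : px (fun x t => -px z x t + 4 * (ρh x t) ^ 3 + 4 * (z x t * ρh x t)
        + 4 * lamh * ρh x t) x t = _ := hD.deriv
    show _ = -px (px z) x t - 12 * (ρh x t) ^ 4 - 16 * (z x t * (ρh x t) ^ 2)
        - 16 * lamh * (ρh x t) ^ 2 - 4 * (z x t) ^ 2 - 8 * lamh * z x t - 4 * lamh ^ 2
        + 4 * (px z x t * ρh x t)
    rw [h4, hρhx x t]; ring
  intro x t
  have hden : ρh x t - ρ x t ≠ 0 := sub_ne_zero.mpr (hsep x t)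
  refine ⟨?_, ?_, ?_⟩
  · -- KdV for z'
    have hT := ((hasDerivAt_pt hz x t).neg.sub
      (((hasDerivAt_pt hρh x t).pow 2).const_mul 2)).sub_const (2 * lamh)
    have h4 : pt (fun x t => -z x t - 2 * (ρh x t) ^ 2 - 2 * lamh) x t = _ := hT.deriv
    -- third x-derivative of z'
    have hD := (((((((hasDerivAt_px hz2 x t).neg.sub
        (((hasDerivAt_px hρh x t).pow 4).const_mul 12)).sub
        (((hasDerivAt_px hz x t).mul ((hasDerivAt_px hρh x t).pow 2)).const_mul 16)).sub
        (((hasDerivAt_px hρh x t).pow 2).const_mul (16 * lamh))).sub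
        (((hasDerivAt_px hz x t).pow 2).const_mul 4)).sub
        ((hasDerivAt_px hz x t).const_mul (8 * lamh))).sub_const (4 * lamh ^ 2)).add
        (((hasDerivAt_px hz1 x t).mul (hasDerivAt_px hρh x t)).const_mul 4)
    have h5 : px (fun x t => -px (px z) x t - 12 * (ρh x t) ^ 4 - 16 * (z x t * (ρh x t) ^ 2)
        - 16 * lamh * (ρh x t) ^ 2 - 4 * (z x t) ^ 2 - 8 * lamh * z x t - 4 * lamh ^ 2
        + 4 * (px z x t * ρh x t)) x t = _ := hD.deriv
    rw [h4, E2, h5]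
    simp only [E1]
    rw [hkdv x t, hρht x t, hρhx x t]
    simp only [Pi.pow_apply]
    ring
  · -- Riccati x-equation for ρ'
    have hDen : HasDerivAt (fun y => ρh y t - ρ y t) (px ρh x t - px ρ x t) x :=
      (hasDerivAt_px hρh x t).sub (hasDerivAt_px hρ x t)
    have hD := ((hasDerivAt_const x (-(lamh - lam))).div hDen hden).sub (hasDerivAt_px hρh x t)
    have h4 : px (fun x t => -(lamh - lam) / (ρh x t - ρ x t) - ρh x t) x t = _ := hD.deriv
    rw [h4, hρx x t, hρhx x t]
    field_simp
    ring
  · -- Riccati t-equation for ρ'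
    have hDen : HasDerivAt (fun s => ρh x s - ρ x s) (pt ρh x t - pt ρ x t) t :=
      (hasDerivAt_pt hρh x t).sub (hasDerivAt_pt hρ x t)
    have hD := ((hasDerivAt_const t (-(lamh - lam))).div hDen hden).sub (hasDerivAt_pt hρh x t)
    have h4 : pt (fun x t => -(lamh - lam) / (ρh x t - ρ x t) - ρh x t) x t = _ := hD.deriv
    rw [h4, hρt x t, hρht x t, E2]
    simp only [E1]
    field_simp
    ring
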